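/- For every linear endomorphism A of ℝ^d and every integer k with 1 ≤ k ≤ d, the operator norm of the k-th exterior power A^{∧k} (with respect to the inner product on ∧^k ℝ^d induced by the standard inner product on ℝ^d) equals the product α_1(A)···α_k(A) of the k largest singular values of A. -/

import Mathlib

open scoped BigOperators

/-- `sval A k` : the (k+1)-st largest singular value of `A`, i.e. the square roots of the
eigenvalues of `Aᵀ * A` listed in decreasing order (0-indexed). -/
noncomputable def sval {d : ℕ} (A : Matrix (Fin d) (Fin d) ℝ) (k : Fin d) : ℝ :=
  (fun i => Real.sqrt ((show (A.transpose * A).IsHermitian by simpa [Matrix.conjTranspose_eq_transpose_of_trivial] using Matrix.isHermitian_conjTranspose_mul_self A).eigenvalues i))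
    (Tuple.sort (fun i => Real.sqrt ((show (A.transpose * A).IsHermitian by simpa [Matrix.conjTranspose_eq_transpose_of_trivial] using Matrix.isHermitian_conjTranspose_mul_self A).eigenvalues i)) k.rev)

/-- `svalNat A k` : the k-th singular value with 0-based natural index, 0 out of range. -/
noncomputable def svalNat {d : ℕ} (A : Matrix (Fin d) (Fin d) ℝ) (k : ℕ) : ℝ :=
  if h : k < d then sval A ⟨k, h⟩ else 0

/-- The singular value function φ^s: for 0 ≤ s ≤ d it is α_1(A)⋯α_{⌊s⌋}(A)·α_{⌈s⌉}(A)^{s-⌊s⌋},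
and |det A|^{s/d} for s ≥ d. -/
noncomputable def phi {d : ℕ} (s : ℝ) (A : Matrix (Fin d) (Fin d) ℝ) : ℝ :=
  if s ≤ d then
    (∏ i ∈ Finset.range ⌊s⌋₊, svalNat A i) * (svalNat A (⌈s⌉₊ - 1)) ^ (s - (⌊s⌋₊ : ℝ))
  else |A.det| ^ (s / (d : ℝ))

/-- The ℓ² (Euclidean) operator norm of a matrix. -/
noncomputable def opNorm {n : Type*} [Fintype n] [DecidableEq n] (A : Matrix n n ℝ) : ℝ :=
  ‖(Matrix.toEuclideanLin A).toContinuousLinearMap‖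

/-- The k-th compound matrix of `A`: the matrix of the k-th exterior power `A^{∧k}` in the
orthonormal basis `e_{i₁} ∧ ⋯ ∧ e_{i_k}` (i₁ < ⋯ < i_k) of `∧^k ℝ^d` with the induced inner
product. Rows/columns are indexed by k-element subsets of `Fin d`. -/
noncomputable def compound {d : ℕ} (A : Matrix (Fin d) (Fin d) ℝ) (k : ℕ) :
    Matrix {s : Finset (Fin d) // s.card = k} {s : Finset (Fin d) // s.card = k} ℝ :=
  fun S T => (Matrix.of fun i j : Fin k =>
    A ((S.1.orderIsoOfFin S.2 i : Fin d)) ((T.1.orderIsoOfFin T.2 j : Fin d))).det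

namespace CompoundAux

open Matrix Finset Equiv
open scoped Matrix.Norms.L2Operator

local notation "ε " σ:arg => ((Equiv.Perm.sign σ : ℤ) : ℝ)

variable {d k : ℕ}

/-- The increasing enumeration of a `k`-element subset of `Fin d`. -/
def emb (S : {s : Finset (Fin d) // s.card = k}) : Fin k → Fin d :=
  fun i => S.1.orderEmbOfFin S.2 i

lemma emb_strictMono (S : {s : Finset (Fin d) // s.card = k}) : StrictMono (emb S) :=
  (S.1.orderEmbOfFin S.2).strictMono

lemma emb_injective (S : {s : Finset (Fin d) // s.card = k}) : Function.Injective (emb S) :=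
  (emb_strictMono S).injective

lemma emb_mem (S : {s : Finset (Fin d) // s.card = k}) (i : Fin k) : emb S i ∈ S.1 :=
  Finset.orderEmbOfFin_mem _ _ _

lemma image_emb (S : {s : Finset (Fin d) // s.card = k}) :
    Finset.image (emb S) Finset.univ = S.1 := by
  apply Finset.eq_of_subset_of_card_le
  · intro x hx
    rcases Finset.mem_image.1 hx with ⟨i, -, rfl⟩
    exact emb_mem S i
  · rw [Finset.card_image_of_injective _ (emb_injective S), Finset.card_univ,
      Fintype.card_fin, S.2]

lemma prod_emb (S : {s : Finset (Fin d) // s.card = k}) (v : Fin d → ℝ) :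
    ∏ i : Fin k, v (emb S i) = ∏ x ∈ S.1, v x := by
  rw [← image_emb S, Finset.prod_image (fun i _ j _ h => emb_injective S h)]

lemma compound_apply (A : Matrix (Fin d) (Fin d) ℝ) (S T : {s : Finset (Fin d) // s.card = k}) :
    compound A k S T = (A.submatrix (emb S) (emb T)).det := rfl

lemma det_mul_aux' {M : Matrix (Fin k) (Fin d) ℝ} {N : Matrix (Fin d) (Fin k) ℝ}
    {p : Fin k → Fin d} (H : ¬Function.Injective p) :
    (∑ σ : Perm (Fin k), ε σ * ∏ x, M (σ x) (p x) * N (p x) x) = 0 := by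
  obtain ⟨i, j, hpij, hij⟩ : ∃ i j, p i = p j ∧ i ≠ j := by
    rw [Function.Injective] at H
    push_neg at H
    exact H
  exact
    Finset.sum_involution (fun σ _ => σ * Equiv.swap i j)
      (fun σ _ => by
        have : (∏ x, M (σ x) (p x)) = ∏ x, M ((σ * Equiv.swap i j) x) (p x) :=
          Fintype.prod_equiv (Equiv.swap i j) _ _ (by simp [Equiv.apply_swap_eq_self hpij])
        simp [this, Equiv.Perm.sign_swap hij, -Equiv.Perm.sign_swap', Finset.prod_mul_distrib])
      (fun σ _ _ => (not_congr Equiv.mul_swap_eq_iff).mpr hij) (fun _ _ => Finset.mem_univ _)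
      fun σ _ => Equiv.mul_swap_involutive i j σ

/-- The expansion of `det (M * N)` over functions, restricted to permutations. -/
lemma det_mul_expansion (M N : Matrix (Fin k) (Fin k) ℝ) :
    M.det * N.det = ∑ τ : Perm (Fin k), ∑ σ : Perm (Fin k),
      ε σ * ∏ i, M (σ i) (τ i) * N (τ i) i := by
  rw [← det_mul]
  calc
    det (M * N) = ∑ p : Fin k → Fin k, ∑ σ : Perm (Fin k),
        ε σ * ∏ i, M (σ i) (p i) * N (p i) i := by
      simp only [det_apply', mul_apply, Finset.prod_univ_sum, Finset.mul_sum,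
        Fintype.piFinset_univ]
      rw [Finset.sum_comm]
    _ = ∑ p : Fin k → Fin k with Function.Bijective p, ∑ σ : Perm (Fin k),
        ε σ * ∏ i, M (σ i) (p i) * N (p i) i := by
      refine (Finset.sum_subset (Finset.filter_subset _ _) fun f _ hbij ↦
        det_mul_aux' ?_).symm
      simp only [Finset.mem_filter, Finset.mem_univ, true_and] at hbij
      intro hinj
      exact hbij ((Finite.injective_iff_bijective).1 hinj)
    _ = ∑ τ : Perm (Fin k), ∑ σ : Perm (Fin k), ε σ * ∏ i, M (σ i) (τ i) * N (τ i) i :=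
      Finset.sum_bij (fun p h ↦ Equiv.ofBijective p (Finset.mem_filter.1 h).2)
        (fun _ _ ↦ Finset.mem_univ _)
        (fun _ _ _ _ h ↦ by injection h)
        (fun b _ ↦ ⟨b, Finset.mem_filter.2 ⟨Finset.mem_univ _, b.bijective⟩,
          Equiv.coe_fn_injective rfl⟩) fun _ _ ↦ rfl

/-- The bijection between pairs (k-subset, permutation) and injective maps `Fin k → Fin d`. -/
def Φ : ({s : Finset (Fin d) // s.card = k} × Perm (Fin k)) →
    {p : Fin k → Fin d // Function.Injective p} :=
  fun x => ⟨fun i => emb x.1 (x.2 i), (emb_injective x.1).comp x.2.injective⟩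

lemma Φ_bijective : Function.Bijective (Φ (d := d) (k := k)) := by
  constructor
  · rintro ⟨S, τ⟩ ⟨S', τ'⟩ h
    have h' : (fun i => emb S (τ i)) = fun i => emb S' (τ' i) := congrArg Subtype.val h
    have hS : S = S' := by
      apply Subtype.ext
      rw [← image_emb S, ← image_emb S']
      have : Finset.image (emb S) Finset.univ = Finset.image (fun i => emb S (τ i))
          Finset.univ := by
        rw [show (fun i => emb S (τ i)) = emb S ∘ τ from rfl, ← Finset.image_image]
        congr 1
        exact (Finset.image_univ_equiv τ).symm
      rw [this, h']
      rw [show (fun i => emb S' (τ' i)) = emb S' ∘ τ' from rfl, ← Finset.image_image]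
      congr 1
      exact Finset.image_univ_equiv τ'
    subst hS
    rw [Equiv.ext fun i => emb_injective S (congrFun h' i)]
  · rintro ⟨p, hp⟩
    set S : {s : Finset (Fin d) // s.card = k} :=
      ⟨Finset.image p Finset.univ, by
        rw [Finset.card_image_of_injective _ hp, Finset.card_univ, Fintype.card_fin]⟩ with hS
    have hmem : ∀ i, p i ∈ S.1 := fun i => Finset.mem_image_of_mem p (Finset.mem_univ i)
    set f : Fin k → Fin k := fun i => (S.1.orderIsoOfFin S.2).symm ⟨p i, hmem i⟩ with hf
    have hfinj : Function.Injective f := by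
      intro a b hab
      apply hp
      have := congrArg (S.1.orderIsoOfFin S.2) hab
      simpa [hf] using congrArg Subtype.val this
    refine ⟨⟨S, Equiv.ofBijective f ((Finite.injective_iff_bijective).1 hfinj)⟩, ?_⟩
    apply Subtype.ext
    funext i
    show emb S (f i) = p i
    have : (S.1.orderIsoOfFin S.2) (f i) = ⟨p i, hmem i⟩ := by
      simp [hf]
    have := congrArg Subtype.val this
    simpa [emb] using this

section steps

variable (M : Matrix (Fin k) (Fin d) ℝ) (N : Matrix (Fin d) (Fin k) ℝ)

private lemma step1 :
    det (M * N) = ∑ p : Fin k → Fin d, ∑ σ : Perm (Fin k),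
        ε σ * ∏ i, M (σ i) (p i) * N (p i) i := by
  simp only [det_apply', mul_apply, Finset.prod_univ_sum, Finset.mul_sum,
    Fintype.piFinset_univ]
  rw [Finset.sum_comm]

private lemma step2 :
    ∑ p : Fin k → Fin d, ∑ σ : Perm (Fin k), ε σ * ∏ i, M (σ i) (p i) * N (p i) i
    = ∑ p : Fin k → Fin d with Function.Injective p, ∑ σ : Perm (Fin k),
        ε σ * ∏ i, M (σ i) (p i) * N (p i) i := by
  refine (Finset.sum_subset (Finset.filter_subset _ _) fun f _ hinj ↦
    det_mul_aux' ?_).symm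
  simpa only [Finset.mem_filter, Finset.mem_univ, true_and] using hinj

private lemma step3 :
    ∑ p : Fin k → Fin d with Function.Injective p, ∑ σ : Perm (Fin k),
        ε σ * ∏ i, M (σ i) (p i) * N (p i) i
    = ∑ p : {p : Fin k → Fin d // Function.Injective p}, ∑ σ : Perm (Fin k),
        ε σ * ∏ i, M (σ i) (p.1 i) * N (p.1 i) i := by
  refine Finset.sum_subtype _ (fun x => ?_) _
  simp

private lemma step4 :
    ∑ p : {p : Fin k → Fin d // Function.Injective p}, ∑ σ : Perm (Fin k),
        ε σ * ∏ i, M (σ i) (p.1 i) * N (p.1 i) i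
    = ∑ x : {s : Finset (Fin d) // s.card = k} × Perm (Fin k), ∑ σ : Perm (Fin k),
        ε σ * ∏ i, M (σ i) (emb x.1 (x.2 i)) * N (emb x.1 (x.2 i)) i :=
  (Fintype.sum_bijective Φ Φ_bijective _ _ (fun x => rfl)).symm

private lemma step5 :
    ∑ x : {s : Finset (Fin d) // s.card = k} × Perm (Fin k), ∑ σ : Perm (Fin k),
        ε σ * ∏ i, M (σ i) (emb x.1 (x.2 i)) * N (emb x.1 (x.2 i)) i
    = ∑ S : {s : Finset (Fin d) // s.card = k}, ∑ τ : Perm (Fin k), ∑ σ : Perm (Fin k),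
        ε σ * ∏ i, M (σ i) (emb S (τ i)) * N (emb S (τ i)) i :=
  Fintype.sum_prod_type (f := fun x : {s : Finset (Fin d) // s.card = k} × Perm (Fin k) =>
    ∑ σ : Perm (Fin k), ε σ * ∏ i, M (σ i) (emb x.1 (x.2 i)) * N (emb x.1 (x.2 i)) i)

private lemma step6 :
    ∑ S : {s : Finset (Fin d) // s.card = k}, ∑ τ : Perm (Fin k), ∑ σ : Perm (Fin k),
        ε σ * ∏ i, M (σ i) (emb S (τ i)) * N (emb S (τ i)) i
    = ∑ S : {s : Finset (Fin d) // s.card = k},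
        (M.submatrix id (emb S)).det * (N.submatrix (emb S) id).det := by
  refine Finset.sum_congr rfl fun S _ => ?_
  rw [det_mul_expansion]
  simp [Matrix.submatrix_apply]

end steps

/-- **Cauchy–Binet formula**. -/
theorem cauchyBinet (M : Matrix (Fin k) (Fin d) ℝ) (N : Matrix (Fin d) (Fin k) ℝ) :
    (M * N).det = ∑ S : {s : Finset (Fin d) // s.card = k},
      (M.submatrix id (emb S)).det * (N.submatrix (emb S) id).det :=
  ((((((step1 M N).trans (step2 M N)).trans (step3 M N)).trans (step4 M N)).trans
    (step5 M N)).trans (step6 M N))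

theorem compound_mul (A B : Matrix (Fin d) (Fin d) ℝ) (k : ℕ) :
    compound (A * B) k = compound A k * compound B k := by
  ext S T
  rw [compound_apply, mul_apply]
  have : (A * B).submatrix (emb S) (emb T)
      = (A.submatrix (emb S) id) * (B.submatrix id (emb T)) := by
    ext i j
    simp [mul_apply, submatrix]
  rw [this, cauchyBinet]
  exact Finset.sum_congr rfl fun U _ => rfl

theorem compound_transpose (A : Matrix (Fin d) (Fin d) ℝ) (k : ℕ) :
    compound Aᵀ k = (compound A k)ᵀ := by
  ext S T
  rw [transpose_apply, compound_apply, compound_apply]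
  rw [show Aᵀ.submatrix (emb S) (emb T) = (A.submatrix (emb T) (emb S))ᵀ from rfl,
    det_transpose]

theorem compound_diagonal (v : Fin d → ℝ) (k : ℕ) :
    compound (Matrix.diagonal v) k
      = Matrix.diagonal (fun S : {s : Finset (Fin d) // s.card = k} => ∏ x ∈ S.1, v x) := by
  ext S T
  rw [compound_apply]
  rcases eq_or_ne S T with rfl | hST
  · have : (Matrix.diagonal v).submatrix (emb S) (emb S)
        = Matrix.diagonal (fun i => v (emb S i)) := by
      ext i j
      rcases eq_or_ne i j with rfl | hij
      · simp [submatrix, diagonal]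
      · simp [submatrix, diagonal_apply_ne _ (fun h => hij (emb_injective S h)), hij]
    rw [this, det_diagonal, prod_emb, Matrix.diagonal_apply_eq]
  · rw [Matrix.diagonal_apply_ne _ hST]
    have hns : ¬ T.1 ⊆ S.1 := by
      intro hsub
      exact hST (Subtype.ext (Finset.eq_of_subset_of_card_le hsub (by rw [S.2, T.2]))).symm
    obtain ⟨x, hxT, hxS⟩ := Finset.not_subset.1 hns
    obtain ⟨j, hj₀⟩ := (T.1.orderIsoOfFin T.2).toEquiv.surjective ⟨x, hxT⟩
    have hj : emb T j = x := congrArg Subtype.val hj₀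
    apply Matrix.det_eq_zero_of_column_eq_zero j
    intro i
    rw [submatrix_apply, hj]
    exact Matrix.diagonal_apply_ne' _ (fun h => hxS (h ▸ emb_mem S i))

theorem compound_one (k : ℕ) :
    compound (1 : Matrix (Fin d) (Fin d) ℝ) k = 1 := by
  rw [← Matrix.diagonal_one, compound_diagonal]
  simp

lemma conjTranspose_eq_transpose {m n : Type*} (A : Matrix m n ℝ) : Aᴴ = Aᵀ :=
  Matrix.ext fun i j => star_trivial _

theorem compound_mem_unitary {U : Matrix (Fin d) (Fin d) ℝ}
    (hU : U ∈ Matrix.unitaryGroup (Fin d) ℝ) (k : ℕ) :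
    compound U k ∈ unitary (Matrix {s : Finset (Fin d) // s.card = k}
      {s : Finset (Fin d) // s.card = k} ℝ) := by
  have h1 : star U * U = 1 := hU.1
  have h2 : U * star U = 1 := hU.2
  have hstar : ∀ (n : Type) [Fintype n] [DecidableEq n] (M : Matrix n n ℝ), star M = Mᵀ :=
    fun n _ _ M => Matrix.ext fun i j => star_trivial _
  constructor
  · show star (compound U k) * compound U k = 1
    rw [show star (compound U k) = (compound U k)ᵀ from Matrix.ext fun i j => star_trivial _,
      ← compound_transpose, ← compound_mul]
    rw [show Uᵀ * U = 1 from by rw [← hstar _ U]; exact h1, compound_one]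
  · show compound U k * star (compound U k) = 1
    rw [show star (compound U k) = (compound U k)ᵀ from Matrix.ext fun i j => star_trivial _,
      ← compound_transpose, ← compound_mul]
    rw [show U * Uᵀ = 1 from by rw [← hstar _ U]; exact h2, compound_one]


/-! ### Norm lemmas -/

lemma star_eq_transpose {n : Type*} [Fintype n] (M : Matrix n n ℝ) : star M = Mᵀ := by
  rw [Matrix.star_eq_conjTranspose]
  exact Matrix.ext fun i j => star_trivial _

lemma euclid_norm_formula {n : Type*} [Fintype n] (y : EuclideanSpace ℝ n) :
    ‖y‖ = Real.sqrt (∑ i, (y i) ^ 2) := by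
  rw [EuclideanSpace.norm_eq]
  congr 1
  exact Finset.sum_congr rfl fun i _ => by rw [Real.norm_eq_abs, sq_abs]

lemma toEuclideanLin_diagonal_apply {n : Type*} [Fintype n] [DecidableEq n] (v : n → ℝ)
    (x : EuclideanSpace ℝ n) (i : n) :
    (Matrix.toEuclideanLin (Matrix.diagonal v) x) i = v i * x i := by
  rw [Matrix.toEuclideanLin_apply]
  exact Matrix.mulVec_diagonal v _ i

lemma norm_diagonal_le {n : Type*} [Fintype n] [DecidableEq n] (v : n → ℝ) {C : ℝ}
    (hC : 0 ≤ C) (h : ∀ i, |v i| ≤ C) :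
    ‖(Matrix.diagonal v : Matrix n n ℝ)‖ ≤ C := by
  rw [Matrix.l2_opNorm_def]
  refine ContinuousLinearMap.opNorm_le_bound _ hC fun x => ?_
  have h1 : ‖(LinearEquiv.trans (Matrix.toEuclideanLin (𝕜 := ℝ) (m := n) (n := n))
      LinearMap.toContinuousLinearMap (Matrix.diagonal v)) x‖
      = Real.sqrt (∑ i, (v i * x i) ^ 2) := by
    rw [show ((LinearEquiv.trans (Matrix.toEuclideanLin (𝕜 := ℝ) (m := n) (n := n))
      LinearMap.toContinuousLinearMap (Matrix.diagonal v)) x : EuclideanSpace ℝ n)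
      = Matrix.toEuclideanLin (Matrix.diagonal v) x from rfl, euclid_norm_formula]
    congr 1
    exact Finset.sum_congr rfl fun i _ => by rw [toEuclideanLin_diagonal_apply]
  rw [h1, euclid_norm_formula]
  calc Real.sqrt (∑ i, (v i * x i) ^ 2)
      ≤ Real.sqrt (∑ i, C ^ 2 * (x i) ^ 2) := by
        apply Real.sqrt_le_sqrt
        refine Finset.sum_le_sum fun i _ => ?_
        rw [mul_pow]
        have h2 : (v i) ^ 2 ≤ C ^ 2 := by
          obtain ⟨ha, hb⟩ := abs_le.mp (h i)
          exact sq_le_sq' ha hb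
        exact mul_le_mul_of_nonneg_right h2 (sq_nonneg _)
    _ = C * Real.sqrt (∑ i, (x i) ^ 2) := by
        rw [← Finset.mul_sum, Real.sqrt_mul (sq_nonneg C), Real.sqrt_sq hC]

lemma abs_le_norm_diagonal {n : Type*} [Fintype n] [DecidableEq n] (v : n → ℝ) (i : n) :
    |v i| ≤ ‖(Matrix.diagonal v : Matrix n n ℝ)‖ := by
  rw [Matrix.l2_opNorm_def]
  have h := ContinuousLinearMap.le_opNorm ((LinearEquiv.trans
    (Matrix.toEuclideanLin (𝕜 := ℝ) (m := n) (n := n)) LinearMap.toContinuousLinearMap)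
    (Matrix.diagonal v)) (EuclideanSpace.single i 1)
  have h1 : ‖((LinearEquiv.trans (Matrix.toEuclideanLin (𝕜 := ℝ) (m := n) (n := n))
      LinearMap.toContinuousLinearMap) (Matrix.diagonal v)) (EuclideanSpace.single i 1)‖
      = |v i| := by
    rw [show (((LinearEquiv.trans (Matrix.toEuclideanLin (𝕜 := ℝ) (m := n) (n := n))
      LinearMap.toContinuousLinearMap) (Matrix.diagonal v)) (EuclideanSpace.single i 1)
      : EuclideanSpace ℝ n)
      = Matrix.toEuclideanLin (Matrix.diagonal v) (EuclideanSpace.single i 1) from rfl,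
      euclid_norm_formula]
    rw [Finset.sum_eq_single_of_mem i (Finset.mem_univ i)]
    · rw [toEuclideanLin_diagonal_apply, EuclideanSpace.single_apply, if_pos rfl, mul_one,
        Real.sqrt_sq_eq_abs]
    · intro j _ hj
      rw [toEuclideanLin_diagonal_apply, EuclideanSpace.single_apply, if_neg hj, mul_zero]
      exact zero_pow two_ne_zero
  have h2 : ‖EuclideanSpace.single i (1 : ℝ)‖ = 1 := by
    rw [EuclideanSpace.norm_single]
    exact norm_one
  rw [h1, h2, mul_one] at h
  exact h

/-! ### Order statistics -/

lemma strictMono_val_le {F : Fin k → Fin d} (hF : StrictMono F) :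
    ∀ i : Fin k, (i : ℕ) ≤ (F i : ℕ) := by
  rintro ⟨i, hi⟩
  induction i with
  | zero => exact Nat.zero_le _
  | succ j ih =>
    have hj : j < k := Nat.lt_of_succ_lt hi
    have h1 := ih hj
    have h2 : F ⟨j, hj⟩ < F ⟨j + 1, hi⟩ := hF (by simp [Fin.lt_def])
    have h3 := Fin.lt_def.mp h2
    simp only [] at h1 h3 ⊢
    omega

lemma emb_le (hkd : k ≤ d) (S : {s : Finset (Fin d) // s.card = k}) (i : Fin k) :
    (emb S i : ℕ) ≤ d - k + i := by
  have hGmono : StrictMono (fun j : Fin k => (emb S j.rev).rev) := by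
    intro a b hab
    rw [Fin.rev_lt_rev]
    exact emb_strictMono S (Fin.rev_lt_rev.mpr hab)
  have h := strictMono_val_le hGmono i.rev
  rw [Fin.rev_rev] at h
  have h1 : (i.rev : ℕ) = k - 1 - (i : ℕ) := by rw [Fin.val_rev]; omega
  have h3 : ((emb S i).rev : ℕ) = d - 1 - (emb S i : ℕ) := by rw [Fin.val_rev]; omega
  have h4 := (emb S i).isLt
  have h5 := i.isLt
  omega

lemma prod_subset_le_topk (w : Fin d → ℝ) (hw : Monotone w) (h0 : ∀ i, 0 ≤ w i)
    (hkd : k ≤ d) (S : {s : Finset (Fin d) // s.card = k}) :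
    ∏ x ∈ S.1, w x ≤ ∏ i : Fin k, w ⟨d - k + i, by have := i.isLt; omega⟩ := by
  rw [← prod_emb S w]
  refine Finset.prod_le_prod (fun i _ => h0 _) (fun i _ => hw ?_)
  rw [Fin.le_def]
  simpa using emb_le hkd S i

/-! ### Singular values via eigenvalues of `Aᴴ * A` -/

noncomputable def μa {d : ℕ} (A : Matrix (Fin d) (Fin d) ℝ) : Fin d → ℝ :=
  (show (A.transpose * A).IsHermitian by simpa [Matrix.conjTranspose_eq_transpose_of_trivial] using Matrix.isHermitian_conjTranspose_mul_self A).eigenvalues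

noncomputable def σa {d : ℕ} (A : Matrix (Fin d) (Fin d) ℝ) : Equiv.Perm (Fin d) :=
  Tuple.sort (fun i => Real.sqrt (μa A i))

lemma sval_eq {d : ℕ} (A : Matrix (Fin d) (Fin d) ℝ) (j : Fin d) :
    sval A j = Real.sqrt (μa A (σa A j.rev)) := rfl

lemma svalNat_eq {d : ℕ} (A : Matrix (Fin d) (Fin d) ℝ) {m : ℕ} (h : m < d) :
    svalNat A m = Real.sqrt (μa A (σa A (Fin.rev ⟨m, h⟩))) := by
  rw [svalNat, dif_pos h, sval_eq]

lemma svalNat_nonneg {d : ℕ} (A : Matrix (Fin d) (Fin d) ℝ) (i : ℕ) :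
    0 ≤ svalNat A i := by
  unfold svalNat
  split
  · exact Real.sqrt_nonneg _
  · exact le_refl 0

lemma μa_nonneg {d : ℕ} (A : Matrix (Fin d) (Fin d) ℝ) (i : Fin d) : 0 ≤ μa A i :=
  Matrix.eigenvalues_conjTranspose_mul_self_nonneg A i

lemma μa_sort_monotone {d : ℕ} (A : Matrix (Fin d) (Fin d) ℝ) :
    Monotone (fun j => μa A (σa A j)) := by
  have hfmono : Monotone (fun j => Real.sqrt (μa A (σa A j))) := by
    have h := Tuple.monotone_sort (fun i => Real.sqrt (μa A i))
    exact h
  intro a b hab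
  have h2 : ∀ j : Fin d, Real.sqrt (μa A (σa A j)) ^ 2 = μa A (σa A j) := fun j =>
    Real.sq_sqrt (μa_nonneg A _)
  calc μa A (σa A a) = Real.sqrt (μa A (σa A a)) ^ 2 := (h2 a).symm
    _ ≤ Real.sqrt (μa A (σa A b)) ^ 2 := pow_le_pow_left₀ (Real.sqrt_nonneg _) (hfmono hab) 2
    _ = μa A (σa A b) := h2 b

noncomputable def Ua {d : ℕ} (A : Matrix (Fin d) (Fin d) ℝ) : Matrix (Fin d) (Fin d) ℝ :=
  ↑(Matrix.IsHermitian.eigenvectorUnitary (show (A.transpose * A).IsHermitian by simpa [Matrix.conjTranspose_eq_transpose_of_trivial] using Matrix.isHermitian_conjTranspose_mul_self A))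

lemma Ua_mem {d : ℕ} (A : Matrix (Fin d) (Fin d) ℝ) :
    Ua A ∈ Matrix.unitaryGroup (Fin d) ℝ :=
  (Matrix.IsHermitian.eigenvectorUnitary (show (A.transpose * A).IsHermitian by simpa [Matrix.conjTranspose_eq_transpose_of_trivial] using Matrix.isHermitian_conjTranspose_mul_self A)).2

lemma spec {d : ℕ} (A : Matrix (Fin d) (Fin d) ℝ) :
    Aᴴ * A = Ua A * Matrix.diagonal (μa A) * star (Ua A) := by
  have h := (show (A.transpose * A).IsHermitian by simpa [Matrix.conjTranspose_eq_transpose_of_trivial] using Matrix.isHermitian_conjTranspose_mul_self A).spectral_theorem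
  simpa [Ua, μa, RCLike.ofReal_real_eq_id, Matrix.conjTranspose_eq_transpose_of_trivial] using h

/-! ### The key computation -/

lemma key {d : ℕ} (A : Matrix (Fin d) (Fin d) ℝ) {k : ℕ} (hk1 : 1 ≤ k) (hkd : k ≤ d) :
    ‖compound A k‖ = ∏ i ∈ Finset.range k, svalNat A i := by
  classical
  haveI : Nonempty {s : Finset (Fin d) // s.card = k} := by
    obtain ⟨t, -, ht⟩ := Finset.exists_subset_card_eq (s := (Finset.univ : Finset (Fin d))) (n := k)
      (by rw [Finset.card_univ, Fintype.card_fin]; exact hkd)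
    exact ⟨⟨t, ht⟩⟩
  have hμ0 := μa_nonneg A
  have hwmono := μa_sort_monotone A
  -- Step I : reduce to the norm of a diagonal matrix
  have hAh : Aᴴ = Aᵀ := conjTranspose_eq_transpose A
  have hBB : (compound A k)ᴴ * compound A k = compound (Aᴴ * A) k := by
    rw [show (compound A k)ᴴ = (compound A k)ᵀ from conjTranspose_eq_transpose _,
      ← compound_transpose, ← compound_mul, hAh]
  have hCU := compound_mem_unitary (Ua_mem A) k
  have hsplit : compound (Aᴴ * A) k
      = compound (Ua A) k * compound (Matrix.diagonal (μa A)) k * star (compound (Ua A) k) := by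
    rw [spec A, compound_mul, compound_mul]
    congr 1
    rw [star_eq_transpose (Ua A), compound_transpose, ← star_eq_transpose]
  have hnormdiag : ‖compound (Aᴴ * A) k‖ = ‖compound (Matrix.diagonal (μa A)) k‖ := by
    rw [hsplit]
    have h1 := CStarRing.norm_mul_coe_unitary
      (compound (Ua A) k * compound (Matrix.diagonal (μa A)) k)
      (star (⟨compound (Ua A) k, hCU⟩ : unitary _))
    rw [Unitary.coe_star] at h1
    rw [h1]
    exact CStarRing.norm_coe_unitary_mul (⟨compound (Ua A) k, hCU⟩ : unitary _) _
  have hsq : ‖compound A k‖ * ‖compound A k‖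
      = ‖Matrix.diagonal (fun S : {s : Finset (Fin d) // s.card = k} => ∏ x ∈ S.1, μa A x)‖ := by
    rw [← Matrix.l2_opNorm_conjTranspose_mul_self, hBB, hnormdiag, compound_diagonal]
  -- Step II : compute the norm of the diagonal matrix
  set c := ∏ i ∈ Finset.range k, svalNat A i with hc
  have hc0 : 0 ≤ c := Finset.prod_nonneg fun i _ => svalNat_nonneg A i
  have htop : ∀ i : Fin k, d - k + (i : ℕ) < d := fun i => by have := i.isLt; omega
  set J : Fin k → Fin d := fun i => ⟨d - k + (i : ℕ), htop i⟩ with hJ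
  have hJinj : Function.Injective J := by
    intro a b hab
    have := congrArg Fin.val hab
    simp only [hJ] at this
    exact Fin.ext (by omega)
  have hcc : c * c = ∏ i : Fin k, μa A (σa A (J i)) := by
    rw [hc, ← Finset.prod_mul_distrib,
      ← Fin.prod_univ_eq_prod_range (fun i => svalNat A i * svalNat A i) k]
    refine Fintype.prod_equiv Fin.revPerm _ _ fun x => ?_
    have hxd : (x : ℕ) < d := lt_of_lt_of_le x.isLt hkd
    rw [svalNat_eq A hxd, Real.mul_self_sqrt (hμ0 _)]
    have hidx : Fin.rev (⟨(x : ℕ), hxd⟩ : Fin d) = J (Fin.revPerm x) := by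
      apply Fin.ext
      have h1 := x.isLt
      simp only [hJ, Fin.val_rev, Fin.revPerm_apply]
      omega
    rw [hidx]
  have hσJinj : Function.Injective (fun i => σa A (J i)) := fun a b h =>
    hJinj ((σa A).injective h)
  have hcard : (Finset.image (fun i => σa A (J i)) Finset.univ).card = k := by
    rw [Finset.card_image_of_injective _ hσJinj, Finset.card_univ, Fintype.card_fin]
  have hPJ : ∏ x ∈ Finset.image (fun i => σa A (J i)) Finset.univ, μa A x
      = ∏ i : Fin k, μa A (σa A (J i)) :=
    Finset.prod_image fun a _ b _ h => hσJinj h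
  have hub : ∀ S : {s : Finset (Fin d) // s.card = k}, ∏ x ∈ S.1, μa A x ≤ c * c := by
    intro S
    have hcard2 : (S.1.image (σa A).symm).card = k := by
      rw [Finset.card_image_of_injective _ (σa A).symm.injective, S.2]
    have himg : ∏ x ∈ S.1, μa A x
        = ∏ y ∈ S.1.image (σa A).symm, μa A (σa A y) := by
      rw [Finset.prod_image (fun a _ b _ h => (σa A).symm.injective h)]
      exact Finset.prod_congr rfl fun x _ => by rw [Equiv.apply_symm_apply]
    rw [himg, hcc]
    exact prod_subset_le_topk (fun j => μa A (σa A j)) hwmono (fun i => hμ0 _) hkd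
      ⟨S.1.image (σa A).symm, hcard2⟩
  have hnormP : ‖Matrix.diagonal
      (fun S : {s : Finset (Fin d) // s.card = k} => ∏ x ∈ S.1, μa A x)‖ = c * c := by
    refine le_antisymm (norm_diagonal_le _ (mul_nonneg hc0 hc0) fun S => ?_) ?_
    · rw [abs_of_nonneg (Finset.prod_nonneg fun x _ => hμ0 x)]
      exact hub S
    · have h2 := abs_le_norm_diagonal
        (fun S : {s : Finset (Fin d) // s.card = k} => ∏ x ∈ S.1, μa A x)
        ⟨Finset.image (fun i => σa A (J i)) Finset.univ, hcard⟩
      calc c * c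
          = ∏ x ∈ Finset.image (fun i => σa A (J i)) Finset.univ, μa A x := by
            rw [hcc, ← hPJ]
        _ = |∏ x ∈ Finset.image (fun i => σa A (J i)) Finset.univ, μa A x| :=
            (abs_of_nonneg (Finset.prod_nonneg fun x _ => hμ0 x)).symm
        _ ≤ _ := h2
  -- Step III : conclude
  have hfinal : ‖compound A k‖ * ‖compound A k‖ = c * c := by rw [hsq, hnormP]
  have := congrArg Real.sqrt hfinal
  rwa [Real.sqrt_mul_self (norm_nonneg _), Real.sqrt_mul_self hc0] at this

end CompoundAux

/-- the operator norm of the k-th exterior power of `A` (computed in the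
orthonormal basis of `∧^k ℝ^d` induced by the standard inner product, i.e. the operator norm
of the k-th compound matrix) equals the product of the k largest singular values of `A`. -/
theorem opNorm_exteriorPower_eq_prod_singularValues
    {d : ℕ} (A : Matrix (Fin d) (Fin d) ℝ) (k : ℕ) (hk1 : 1 ≤ k) (hkd : k ≤ d) :
    opNorm (compound A k) = ∏ i ∈ Finset.range k, svalNat A i :=
  CompoundAux.key A hk1 hkd
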